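/- Under Assumptions 1, 2 and 3, the normalized stepsizes satisfy γ_*^k ≤ φ for all k = 1,2,…, and limsup_{k→∞} γ_*^k ≤ φ, where φ = 2(1−η)Q. -/

import Mathlib

open Finset Filter Classical
open Matrix

private lemma inner_clm_eq {n : ℕ} (M : Matrix (Fin n) (Fin n) ℝ) (d : EuclideanSpace ℝ (Fin n)) :
    (inner ℝ d (Matrix.toEuclideanCLM (𝕜:=ℝ) M d) : ℝ)
      = (star ((WithLp.equiv 2 _) d)) ⬝ᵥ (M *ᵥ ((WithLp.equiv 2 _) d)) := by
  rw [EuclideanSpace.inner_eq_star_dotProduct, Matrix.ofLp_toEuclideanCLM, dotProduct_comm]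
  rfl

private lemma quad_nonneg {n : ℕ} (M : Matrix (Fin n) (Fin n) ℝ) (h : M.PosSemidef)
    (d : EuclideanSpace ℝ (Fin n)) :
    0 ≤ (inner ℝ d (Matrix.toEuclideanCLM (𝕜:=ℝ) M d) : ℝ) := by
  rw [inner_clm_eq]; exact h.dotProduct_mulVec_nonneg _

private lemma quad_le {n : ℕ} (M : Matrix (Fin n) (Fin n) ℝ) (a : ℝ)
    (h : (a • (1:Matrix (Fin n) (Fin n) ℝ) - M).PosSemidef) (d : EuclideanSpace ℝ (Fin n)) :
    (inner ℝ d (Matrix.toEuclideanCLM (𝕜:=ℝ) M d) : ℝ) ≤ a * ‖d‖^2 := by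
  have hq := h.dotProduct_mulVec_nonneg ((WithLp.equiv 2 _) d)
  have hn : (star ((WithLp.equiv 2 _) d)) ⬝ᵥ ((WithLp.equiv 2 (Fin n → ℝ)) d) = ‖d‖^2 := by
    rw [← real_inner_self_eq_norm_sq]
    simp [inner, dotProduct]
  rw [inner_clm_eq]
  rw [Matrix.sub_mulVec, dotProduct_sub, Matrix.smul_mulVec, Matrix.one_mulVec,
    dotProduct_smul, sub_nonneg] at hq
  calc _ ≤ a • ((star ((WithLp.equiv 2 _) d)) ⬝ᵥ ((WithLp.equiv 2 (Fin n → ℝ)) d)) := hq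
  _ = a * ‖d‖^2 := by rw [smul_eq_mul, hn]

private lemma psd_add {n : ℕ} (A B : Matrix (Fin n) (Fin n) ℝ)
    (hA : A.PosSemidef) (hB : B.PosSemidef) : (A + B).PosSemidef := by
  refine Matrix.PosSemidef.of_dotProduct_mulVec_nonneg (hA.1.add hB.1) fun v => ?_
  rw [Matrix.add_mulVec, dotProduct_add]
  exact add_nonneg (hA.dotProduct_mulVec_nonneg v) (hB.dotProduct_mulVec_nonneg v)

private lemma psd_smul_one {n : ℕ} {c : ℝ} (hc : 0 ≤ c) :
    (c • (1:Matrix (Fin n) (Fin n) ℝ)).PosSemidef := by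
  refine Matrix.PosSemidef.of_dotProduct_mulVec_nonneg ?_ ?_
  · simp [Matrix.IsHermitian]
  · intro v
    rw [Matrix.smul_mulVec, Matrix.one_mulVec, dotProduct_smul]
    refine smul_nonneg hc ?_
    simp only [dotProduct, star_trivial, Pi.star_apply]
    exact Finset.sum_nonneg fun i _ => by simpa using mul_self_nonneg (v i)

private lemma psd_cast {n : ℕ} (s t : ℝ) (A : Matrix (Fin n) (Fin n) ℝ) (hst : s = t)
    (h : (s • (1:Matrix (Fin n) (Fin n) ℝ) - A).PosSemidef) :
    (t • (1:Matrix (Fin n) (Fin n) ℝ) - A).PosSemidef := hst ▸ h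

theorem statement2
    (n m : ℕ) (hm : 1 < m)
    (f : ℕ → EuclideanSpace ℝ (Fin n) → ℝ)
    (g : ℕ → EuclideanSpace ℝ (Fin n) → EuclideanSpace ℝ (Fin n))
    (hess : ℕ → EuclideanSpace ℝ (Fin n) → Matrix (Fin n) (Fin n) ℝ)
    (hgrad : ∀ i ∈ Finset.Icc 1 m, ∀ y, HasGradientAt (f i) (g i y) y)
    (hhess : ∀ i ∈ Finset.Icc 1 m, ∀ y, HasFDerivAt (g i) (Matrix.toEuclideanCLM (𝕜 := ℝ) (hess i y)) y)
    (hcont : ∀ i ∈ Finset.Icc 1 m, Continuous (hess i))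
    (α : ℕ → ℝ) (hα : ∀ k, 1 ≤ k → 0 < α k)
    (x : ℕ → ℕ → EuclideanSpace ℝ (Fin n))
    (H : ℕ → ℕ → Matrix (Fin n) (Fin n) ℝ)
    (hH0 : H 1 0 = 0)
    (hHnext : ∀ k, 1 ≤ k → H (k+1) 0 = H k m)
    (hHrec : ∀ k, 1 ≤ k → ∀ i ∈ Finset.Icc 1 m, H k i = H k (i-1) + hess i (x k i))
    (hxnext : ∀ k, 1 ≤ k → x (k+1) 1 = x k (m+1))
    (hiter : ∀ k, 1 ≤ k → ∀ i ∈ Finset.Icc 1 m,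
      x k (i+1) = x k i - α k • (Matrix.toEuclideanCLM (𝕜 := ℝ) (H k i)⁻¹) (g i (x k i)))
    (X : Set (EuclideanSpace ℝ (Fin n))) (hX : IsCompact X)
    (hbound : ∀ k, 1 ≤ k → ∀ i ∈ Finset.Icc 1 m, x k i ∈ X)
    (c C : ℝ) (hc : 0 < c) (hcC : c ≤ C)
    (hlb : ∀ i ∈ Finset.Icc 1 m, ∀ y, (hess i y - c • 1).PosSemidef)
    (hub : ∀ i ∈ Finset.Icc 1 m, ∀ y, (C • (1 : Matrix (Fin n) (Fin n) ℝ) - hess i y).PosSemidef)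
    (η : ℝ) (hη : η ∈ Set.Ioo (0:ℝ) 1)
    (αstar : ℕ → ℝ)
    (hαstar : ∀ k, 1 ≤ k → αstar k =
      if x (k+1) 1 ≠ x k 1 then
        ((1 - η)/C) *
          (inner ℝ (x (k+1) 1 - x k 1) ((Matrix.toEuclideanCLM (𝕜 := ℝ) (H k m)) (x (k+1) 1 - x k 1)) : ℝ) /
          (‖x (k+1) 1 - x k 1‖ * (∑ i ∈ Finset.Icc 2 m, ‖x k i - x k 1‖)
            + ((m : ℝ)/2) * ‖x (k+1) 1 - x k 1‖^2)
      else 0)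
    (hstep : ∀ k, 1 ≤ k → 1 ≤ α k ∧ α k ≤ max 1 (αstar k))
 :
    (∀ k, 1 ≤ k → αstar k / k ≤ 2 * (1 - η) * (C / c)) ∧
      Filter.limsup (fun k => αstar k / k) Filter.atTop ≤ 2 * (1 - η) * (C / c) := by
  obtain ⟨hη0, hη1⟩ := hη
  have hC : (0:ℝ) < C := lt_of_lt_of_le hc hcC
  have hm0 : (0:ℝ) < m := by exact_mod_cast (by omega : 0 < m)
  -- each Hessian is PSD
  have hessPSD : ∀ i ∈ Finset.Icc 1 m, ∀ y, (hess i y).PosSemidef := by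
    intro i hi y
    have h1 := psd_add _ _ (hlb i hi y) (psd_smul_one hc.le)
    simpa using h1
  -- joint induction: H k i is PSD and bounded above by ((k-1)m+i)C • 1
  have key : ∀ k, 1 ≤ k → ∀ i, i ≤ m →
      (H k i).PosSemidef ∧
        (((((k:ℝ)-1)*(m:ℝ) + (i:ℝ))*C) • (1:Matrix (Fin n) (Fin n) ℝ) - H k i).PosSemidef := by
    intro k
    induction k with
    | zero => omega
    | succ k ih =>
      intro _
      have base : (H (k+1) 0).PosSemidef ∧
          (((((((k:ℕ)+1:ℕ):ℝ)-1)*(m:ℝ) + ((0:ℕ):ℝ))*C) • (1:Matrix (Fin n) (Fin n) ℝ)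
            - H (k+1) 0).PosSemidef := by
        rcases Nat.eq_zero_or_pos k with rfl | hk1
        · constructor
          · rw [show (0:ℕ)+1 = 1 from rfl, hH0]; exact Matrix.PosSemidef.zero
          · rw [show (0:ℕ)+1 = 1 from rfl, hH0]
            refine psd_cast 0 _ _ ?_ ?_
            · push_cast; ring
            · simpa using (Matrix.PosSemidef.zero (n := Fin n) (R := ℝ))
        · have hprev := ih hk1 m le_rfl
          rw [hHnext k hk1]
          refine ⟨hprev.1, ?_⟩
          refine psd_cast _ _ _ ?_ hprev.2
          push_cast; ring
      intro i
      induction i with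
      | zero => intro _; exact base
      | succ j ihj =>
        intro hi
        have hjm : j ≤ m := Nat.le_of_succ_le hi
        have hj := ihj hjm
        have hmem : j+1 ∈ Finset.Icc 1 m := Finset.mem_Icc.mpr ⟨Nat.succ_le_succ (Nat.zero_le _), hi⟩
        have hrec := hHrec (k+1) (by omega) (j+1) hmem
        simp only [Nat.add_sub_cancel] at hrec
        constructor
        · rw [hrec]; exact psd_add _ _ hj.1 (hessPSD _ hmem _)
        · rw [hrec]
          have hsum := psd_add _ _ hj.2 (hub (j+1) hmem (x (k+1) (j+1)))
          have heq : ((((((k+1:ℕ):ℝ))-1)*(m:ℝ) + (j:ℝ))*C) • (1:Matrix (Fin n) (Fin n) ℝ)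
                - H (k+1) j + (C • 1 - hess (j+1) (x (k+1) (j+1)))
              = ((((((k+1:ℕ):ℝ))-1)*(m:ℝ) + (((j+1:ℕ)):ℝ))*C) • (1:Matrix (Fin n) (Fin n) ℝ)
                - (H (k+1) j + hess (j+1) (x (k+1) (j+1))) := by
            have hsc : ((((((k+1:ℕ):ℝ))-1)*(m:ℝ) + (((j+1:ℕ)):ℝ))*C)
                = ((((((k+1:ℕ):ℝ))-1)*(m:ℝ) + (j:ℝ))*C) + C := by push_cast; ring
            rw [hsc, add_smul]
            abel
          rw [← heq]
          exact hsum
  -- bounds on αstar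
  have hub_a : ∀ k, 1 ≤ k → 0 ≤ αstar k ∧ αstar k ≤ 2*(1-η)*(k:ℝ) := by
    intro k hk
    have hk0 : (0:ℝ) < k := by exact_mod_cast hk
    rw [hαstar k hk]
    by_cases hd : x (k+1) 1 ≠ x k 1
    · rw [if_pos hd]
      set d : EuclideanSpace ℝ (Fin n) := x (k+1) 1 - x k 1 with hdd
      have hd0 : d ≠ 0 := sub_ne_zero.mpr hd
      have hnd : 0 < ‖d‖ := norm_pos_iff.mpr hd0
      have hkey := key k hk m le_rfl
      set N : ℝ := (inner ℝ d ((Matrix.toEuclideanCLM (𝕜:=ℝ) (H k m)) d) : ℝ) with hNN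
      have hN0 : 0 ≤ N := quad_nonneg _ hkey.1 d
      have hNle : N ≤ (k:ℝ)*(m:ℝ)*C*‖d‖^2 := by
        have h1 := quad_le _ _ hkey.2 d
        have h2 : (((k:ℝ)-1)*(m:ℝ) + (m:ℝ))*C * ‖d‖^2 = (k:ℝ)*(m:ℝ)*C*‖d‖^2 := by ring
        linarith [h1, h2.le]
      set S : ℝ := ∑ i ∈ Finset.Icc 2 m, ‖x k i - x k 1‖ with hSS
      have hS : 0 ≤ S := Finset.sum_nonneg fun _ _ => norm_nonneg _
      have hD0 : 0 < (m:ℝ)/2 * ‖d‖^2 := by positivity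
      have hD : (m:ℝ)/2*‖d‖^2 ≤ ‖d‖*S + (m:ℝ)/2*‖d‖^2 :=
        le_add_of_nonneg_left (mul_nonneg hnd.le hS)
      have hcoef : 0 ≤ (1-η)/C := div_nonneg (by linarith) hC.le
      constructor
      · exact div_nonneg (mul_nonneg hcoef hN0) (le_trans hD0.le hD)
      · calc ((1-η)/C) * N / (‖d‖*S + (m:ℝ)/2*‖d‖^2)
            ≤ ((1-η)/C) * ((k:ℝ)*(m:ℝ)*C*‖d‖^2) / ((m:ℝ)/2*‖d‖^2) := by
              refine div_le_div₀ (by positivity) ?_ hD0 hD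
              exact mul_le_mul_of_nonneg_left hNle hcoef
        _ = 2*(1-η)*(k:ℝ) := by
              field_simp
    · rw [if_neg hd]
      exact ⟨le_refl 0, mul_nonneg (by linarith) hk0.le⟩
  have part1 : ∀ k, 1 ≤ k → αstar k / k ≤ 2 * (1 - η) * (C / c) := by
    intro k hk
    have hk0 : (0:ℝ) < k := by exact_mod_cast hk
    have h1 : αstar k / k ≤ 2*(1-η) := by
      rw [div_le_iff₀ hk0]
      exact (hub_a k hk).2
    have h2 : 2*(1-η) ≤ 2*(1-η)*(C/c) := by
      refine le_mul_of_one_le_right (by linarith) ?_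
      rw [le_div_iff₀ hc]
      linarith
    linarith
  refine ⟨part1, ?_⟩
  have hev : ∀ᶠ k in Filter.atTop, αstar k / (k:ℝ) ≤ 2 * (1 - η) * (C / c) :=
    Filter.eventually_atTop.mpr ⟨1, part1⟩
  have h0 : ∀ᶠ k in Filter.atTop, (0:ℝ) ≤ αstar k / (k:ℝ) :=
    Filter.eventually_atTop.mpr ⟨1, fun k hk =>
      div_nonneg (hub_a k hk).1 (Nat.cast_nonneg k)⟩
  exact Filter.limsup_le_of_le (Filter.isCoboundedUnder_le_of_eventually_le _ h0) hev
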